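/- For every 2-coloring of the edges of the complete graph on N = 4m+1 vertices, the number of monochromatic triangles is at least 2m(m-1)(4m+1)/3. -/

import Mathlib

open Finset

/-- The set of monochromatic triangles of a 2-coloring `col` of the edges of
the complete graph on `Fin N`. -/
def monoTriangles {N : ℕ} (col : Fin N → Fin N → Bool) : Finset (Finset (Fin N)) :=
  (Finset.univ.powersetCard 3).filter
    (fun s => (∀ i ∈ s, ∀ j ∈ s, i ≠ j → col i j = true) ∨
              (∀ i ∈ s, ∀ j ∈ s, i ≠ j → col i j = false))

section Goodman

variable {N : ℕ} (col : Fin N → Fin N → Bool)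

/-- Monochromaticity predicate. -/
def isMono (s : Finset (Fin N)) : Prop :=
  (∀ i ∈ s, ∀ j ∈ s, i ≠ j → col i j = true) ∨
  (∀ i ∈ s, ∀ j ∈ s, i ≠ j → col i j = false)

instance : DecidablePred (isMono col) := fun s => by unfold isMono; infer_instance

/-- `v` is a bichromatic apex of `s`. -/
def apexE (v : Fin N) (s : Finset (Fin N)) : Prop :=
  ∃ i ∈ s, ∃ j ∈ s, i ≠ j ∧ i ≠ v ∧ j ≠ v ∧ col v i ≠ col v j

instance (v : Fin N) : DecidablePred (apexE col v) := fun s => by unfold apexE; infer_instance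

lemma apex_iff {a b c : Fin N} (hab : a ≠ b) (hac : a ≠ c) (hbc : b ≠ c) :
    apexE col a {a, b, c} ↔ col a b ≠ col a c := by
  constructor
  · rintro ⟨i, hi, j, hj, hij, hia, hja, hne⟩
    simp only [Finset.mem_insert, Finset.mem_singleton] at hi hj
    rcases hi with rfl | rfl | rfl <;> rcases hj with rfl | rfl | rfl <;>
      first
        | exact absurd rfl hia
        | exact absurd rfl hja
        | exact absurd rfl hij
        | exact hne
        | exact fun h => hne h.symm
  · intro h
    exact ⟨b, by simp, c, by simp, hbc, hab.symm, hac.symm, h⟩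

lemma allSame_isMono (hsym : ∀ i j, col i j = col j i) {a b c : Fin N}
    (hxy : col a b = col b c) (hyz : col b c = col a c) :
    isMono col {a, b, c} := by
  cases h : col a b
  · right
    intro i hi j hj hij
    have H1 : col a b = false := h
    have H2 : col b c = false := hxy ▸ h
    have H3 : col a c = false := hyz ▸ H2
    have H4 : col b a = false := (hsym b a).trans H1
    have H5 : col c a = false := (hsym c a).trans H3
    have H6 : col c b = false := (hsym c b).trans H2
    simp only [Finset.mem_insert, Finset.mem_singleton] at hi hj
    rcases hi with rfl | rfl | rfl <;> rcases hj with rfl | rfl | rfl <;>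
      first | exact absurd rfl hij | assumption
  · left
    intro i hi j hj hij
    have H1 : col a b = true := h
    have H2 : col b c = true := hxy ▸ h
    have H3 : col a c = true := hyz ▸ H2
    have H4 : col b a = true := (hsym b a).trans H1
    have H5 : col c a = true := (hsym c a).trans H3
    have H6 : col c b = true := (hsym c b).trans H2
    simp only [Finset.mem_insert, Finset.mem_singleton] at hi hj
    rcases hi with rfl | rfl | rfl <;> rcases hj with rfl | rfl | rfl <;>
      first | exact absurd rfl hij | assumption

/-- A monochromatic triangle has no bichromatic apex. -/
lemma mono_apex_card (s : Finset (Fin N)) (hs : isMono col s) :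
    (s.filter (fun v => apexE col v s)).card = 0 := by
  rw [Finset.card_eq_zero, Finset.filter_eq_empty_iff]
  rintro v hv ⟨i, hi, j, hj, hij, hiv, hjv, hne⟩
  rcases hs with h | h
  · exact hne ((h v hv i hi hiv.symm).trans (h v hv j hj hjv.symm).symm)
  · exact hne ((h v hv i hi hiv.symm).trans (h v hv j hj hjv.symm).symm)

/-- A non-monochromatic triangle has exactly two bichromatic apexes. -/
lemma nonmono_apex_card (hsym : ∀ i j, col i j = col j i) (s : Finset (Fin N))
    (hcard : s.card = 3) (hs : ¬ isMono col s) :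
    (s.filter (fun v => apexE col v s)).card = 2 := by
  obtain ⟨a, b, c, hab, hac, hbc, rfl⟩ := Finset.card_eq_three.mp hcard
  have hEa : apexE col a {a, b, c} ↔ col a b ≠ col a c := apex_iff col hab hac hbc
  have hEb : apexE col b {a, b, c} ↔ col b a ≠ col b c := by
    rw [Finset.insert_comm]
    exact apex_iff col hab.symm hbc hac
  have hEc : apexE col c {a, b, c} ↔ col c a ≠ col c b := by
    have : ({a, b, c} : Finset (Fin N)) = {c, a, b} := by
      ext x
      simp only [Finset.mem_insert, Finset.mem_singleton]
      tauto
    rw [this]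
    exact apex_iff col hac.symm hbc.symm hab
  have hkey : ¬ (col a b = col b c ∧ col b c = col a c) := by
    rintro ⟨h1, h2⟩
    exact hs (allSame_isMono col hsym h1 h2)
  have hcc : (({a, b, c} : Finset (Fin N)).filter (fun v => apexE col v {a, b, c})).card =
      (if apexE col a {a, b, c} then 1 else 0) +
      ((if apexE col b {a, b, c} then 1 else 0) +
       (if apexE col c {a, b, c} then 1 else 0)) := by
    rw [Finset.card_filter, Finset.sum_insert (by simp [hab, hac]),
      Finset.sum_insert (by simp [hbc]), Finset.sum_singleton]
  rw [hcc]
  rw [if_congr hEa rfl rfl, if_congr hEb rfl rfl, if_congr hEc rfl rfl]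
  have h1 : col b a = col a b := hsym b a
  have h2 : col c a = col a c := hsym c a
  have h3 : col c b = col b c := hsym c b
  rw [h1, h2, h3]
  cases hx : col a b <;> cases hy : col b c <;> cases hz : col a c <;> simp_all

end Goodman

/-- Goodman, case `N = 4m+1`: every 2-coloring of the edges of
`K_{4m+1}` has at least `2m(m-1)(4m+1)/3` monochromatic triangles. -/
theorem goodman_4m_add_one (m : ℕ)
    (col : Fin (4 * m + 1) → Fin (4 * m + 1) → Bool)
    (hsym : ∀ i j, col i j = col j i) :
    2 * m * (m - 1) * (4 * m + 1) / 3 ≤ (monoTriangles col).card := by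
  set T : Finset (Finset (Fin (4 * m + 1))) := Finset.univ.powersetCard 3 with hT
  -- identification of monoTriangles with a filter by isMono
  have hmono : monoTriangles col = T.filter (isMono col) := rfl
  -- the double count
  have hdc : ∑ s ∈ T, (s.filter (fun v => apexE col v s)).card
      = ∑ v : Fin (4 * m + 1), (T.filter (fun s => v ∈ s ∧ apexE col v s)).card := by
    have h1 : ∀ s : Finset (Fin (4 * m + 1)), (s.filter (fun v => apexE col v s)).card
        = ∑ v : Fin (4 * m + 1), if v ∈ s ∧ apexE col v s then 1 else 0 := by
      intro s
      rw [← Finset.card_filter]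
      congr 1
      ext v
      simp [and_comm]
    have h2 : ∀ v : Fin (4 * m + 1), (T.filter (fun s => v ∈ s ∧ apexE col v s)).card
        = ∑ s ∈ T, if v ∈ s ∧ apexE col v s then 1 else 0 := fun v =>
      Finset.card_filter _ _
    calc ∑ s ∈ T, (s.filter (fun v => apexE col v s)).card
        = ∑ s ∈ T, ∑ v : Fin (4 * m + 1), if v ∈ s ∧ apexE col v s then 1 else 0 := by
          exact Finset.sum_congr rfl fun s _ => h1 s
      _ = ∑ v : Fin (4 * m + 1), ∑ s ∈ T, if v ∈ s ∧ apexE col v s then 1 else 0 :=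
          Finset.sum_comm
      _ = ∑ v : Fin (4 * m + 1), (T.filter (fun s => v ∈ s ∧ apexE col v s)).card := by
          exact Finset.sum_congr rfl fun v _ => (h2 v).symm
  -- left side of the double count equals 2 * (number of non-mono triangles)
  have hleft : ∑ s ∈ T, (s.filter (fun v => apexE col v s)).card
      = 2 * (T.filter (fun s => ¬ isMono col s)).card := by
    rw [← Finset.sum_filter_add_sum_filter_not T (isMono col)]
    have e1 : ∑ s ∈ T.filter (isMono col), (s.filter (fun v => apexE col v s)).card = 0 := by
      apply Finset.sum_eq_zero
      intro s hsmem
      exact mono_apex_card col s (Finset.mem_filter.mp hsmem).2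
    have e2 : ∑ s ∈ T.filter (fun s => ¬ isMono col s),
        (s.filter (fun v => apexE col v s)).card
        = 2 * (T.filter (fun s => ¬ isMono col s)).card := by
      rw [Finset.sum_congr rfl (fun s hsmem => ?_), Finset.sum_const, smul_eq_mul, mul_comm]
      have hm := Finset.mem_filter.mp hsmem
      have hcard3 : s.card = 3 := (Finset.mem_powersetCard.mp hm.1).2
      exact nonmono_apex_card col hsym s hcard3 hm.2
    rw [e1, e2, zero_add]
  -- each vertex fiber is at most 4m²
  have hfiber : ∀ v : Fin (4 * m + 1), (T.filter (fun s => v ∈ s ∧ apexE col v s)).card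
      ≤ 4 * m ^ 2 := by
    intro v
    set R : Finset (Fin (4 * m + 1)) := Finset.univ.filter (fun i => i ≠ v ∧ col v i = true) with hR
    set B : Finset (Fin (4 * m + 1)) := Finset.univ.filter (fun i => i ≠ v ∧ col v i = false) with hB
    -- structure of a fiber element
    have hstruct : ∀ s ∈ T.filter (fun s => v ∈ s ∧ apexE col v s),
        ∃ i j : Fin (4 * m + 1), i ∈ R ∧ j ∈ B ∧ s = {v, i, j} ∧
          s.filter (fun x => x ≠ v ∧ col v x = true) = {i} ∧
          s.filter (fun x => x ≠ v ∧ col v x = false) = {j} := by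
      intro s hsmem
      have hmem := Finset.mem_filter.mp hsmem
      have hsT := hmem.1
      have hvs := hmem.2.1
      obtain ⟨i0, hi0, j0, hj0, hij0, hi0v, hj0v, hne0⟩ := hmem.2.2
      have hcard3 : s.card = 3 := (Finset.mem_powersetCard.mp hsT).2
      -- normalize so that i is red and j is blue
      obtain ⟨i, j, hij, hiv, hjv, hvi, hvj, his, hjs⟩ :
          ∃ i j : Fin (4 * m + 1), i ≠ j ∧ i ≠ v ∧ j ≠ v ∧ col v i = true ∧ col v j = false ∧
            i ∈ s ∧ j ∈ s := by
        cases hci : col v i0 <;> cases hcj : col v j0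
        · exact absurd (hci.trans hcj.symm) hne0
        · exact ⟨j0, i0, hij0.symm, hj0v, hi0v, hcj, hci, hj0, hi0⟩
        · exact ⟨i0, j0, hij0, hi0v, hj0v, hci, hcj, hi0, hj0⟩
        · exact absurd (hci.trans hcj.symm) hne0
      have hs3 : s = {v, i, j} := by
        refine (Finset.eq_of_subset_of_card_le ?_ ?_).symm
        · intro x hx
          simp only [Finset.mem_insert, Finset.mem_singleton] at hx
          rcases hx with rfl | rfl | rfl <;> assumption
        · rw [hcard3]
          rw [Finset.card_insert_of_notMem (by simp [Ne.symm hiv, Ne.symm hjv]),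
            Finset.card_insert_of_notMem (by simp [hij]), Finset.card_singleton]
      refine ⟨i, j, by simp [hR, hiv, hvi], by simp [hB, hjv, hvj], hs3, ?_, ?_⟩
      · rw [hs3]
        ext x
        simp only [Finset.mem_filter, Finset.mem_insert, Finset.mem_singleton]
        constructor
        · rintro ⟨rfl | rfl | rfl, hxv, hxc⟩
          · exact absurd rfl hxv
          · rfl
          · rw [hvj] at hxc; exact absurd hxc (by simp)
        · rintro rfl
          exact ⟨Or.inr (Or.inl rfl), hiv, hvi⟩
      · rw [hs3]
        ext x
        simp only [Finset.mem_filter, Finset.mem_insert, Finset.mem_singleton]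
        constructor
        · rintro ⟨rfl | rfl | rfl, hxv, hxc⟩
          · exact absurd rfl hxv
          · rw [hvi] at hxc; exact absurd hxc (by simp)
          · rfl
        · rintro rfl
          exact ⟨Or.inr (Or.inr rfl), hjv, hvj⟩
    -- the injection into R ×ˢ B
    have hinj : (T.filter (fun s => v ∈ s ∧ apexE col v s)).card ≤ (R ×ˢ B).card := by
      apply Finset.card_le_card_of_injOn
        (fun s => (WithTop.untopD v ((s.filter (fun x => x ≠ v ∧ col v x = true)).min),
                   WithTop.untopD v ((s.filter (fun x => x ≠ v ∧ col v x = false)).min)))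
      · intro s hsmem
        obtain ⟨i, j, hiR, hjB, _, hfi, hfj⟩ := hstruct s hsmem
        dsimp only
        rw [hfi, hfj, Finset.min_singleton, Finset.min_singleton]
        simpa using ⟨hiR, hjB⟩
      · intro s1 hs1 s2 hs2 hfeq
        simp only [Finset.coe_filter, Set.mem_setOf_eq] at hs1 hs2
        dsimp only at hfeq
        obtain ⟨i1, j1, _, _, he1, hfi1, hfj1⟩ := hstruct s1 (Finset.mem_filter.mpr hs1)
        obtain ⟨i2, j2, _, _, he2, hfi2, hfj2⟩ := hstruct s2 (Finset.mem_filter.mpr hs2)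
        rw [hfi1, hfj1, Finset.min_singleton, Finset.min_singleton] at hfeq
        rw [hfi2, hfj2, Finset.min_singleton, Finset.min_singleton] at hfeq
        simp only [Prod.mk.injEq] at hfeq
        have h1 : i1 = i2 := by simpa using hfeq.1
        have h2 : j1 = j2 := by simpa using hfeq.2
        rw [he1, he2, h1, h2]
    -- card of R ×ˢ B is at most 4m²
    have hRB : R.card + B.card = 4 * m := by
      have hRe : R = (Finset.univ.erase v).filter (fun i => col v i = true) := by
        ext x; simp [hR, Finset.mem_erase, and_comm]
      have hBe : B = (Finset.univ.erase v).filter (fun i => ¬ col v i = true) := by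
        ext x
        simp only [hB, Finset.mem_filter, Finset.mem_erase, Finset.mem_univ, true_and,
          and_true, Bool.not_eq_true]
        try tauto
      rw [hRe, hBe, Finset.card_filter_add_card_filter_not,
        Finset.card_erase_of_mem (Finset.mem_univ v), Finset.card_univ, Fintype.card_fin]
      omega
    have hRBle : R.card * B.card ≤ 4 * m ^ 2 := by
      have h4 : 4 * (R.card * B.card) ≤ (R.card + B.card) ^ 2 := by
        nlinarith [two_mul_le_add_sq R.card B.card]
      rw [hRB] at h4
      have h16 : (4 * m) ^ 2 = 16 * m ^ 2 := by ring
      rw [h16] at h4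
      omega
    calc (T.filter (fun s => v ∈ s ∧ apexE col v s)).card
        ≤ (R ×ˢ B).card := hinj
      _ = R.card * B.card := Finset.card_product R B
      _ ≤ 4 * m ^ 2 := hRBle
  -- total bound on the double count
  have htotal : 2 * (T.filter (fun s => ¬ isMono col s)).card ≤ (4 * m + 1) * (4 * m ^ 2) := by
    rw [← hleft, hdc]
    calc ∑ v : Fin (4 * m + 1), (T.filter (fun s => v ∈ s ∧ apexE col v s)).card
        ≤ ∑ _v : Fin (4 * m + 1), 4 * m ^ 2 := Finset.sum_le_sum fun v _ => hfiber v
      _ = (4 * m + 1) * (4 * m ^ 2) := by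
          rw [Finset.sum_const, Finset.card_univ, Fintype.card_fin, smul_eq_mul]
  -- counting triangles
  have hTcard : T.card = (4 * m + 1).choose 3 := by
    rw [hT, Finset.card_powersetCard, Finset.card_univ, Fintype.card_fin]
  have hsplit : (monoTriangles col).card + (T.filter (fun s => ¬ isMono col s)).card
      = T.card := by
    rw [hmono]
    exact Finset.card_filter_add_card_filter_not (isMono col)
  -- final arithmetic
  have hchoose : 6 * (4 * m + 1).choose 3 = (4 * m + 1) * (4 * m) * (4 * m - 1) := by
    have h1 : (4 * m + 1).descFactorial 3 = 6 * (4 * m + 1).choose 3 := by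
      rw [Nat.descFactorial_eq_factorial_mul_choose]
      norm_num [Nat.factorial]
    have e1 : 4 * m + 1 - 2 = 4 * m - 1 := by omega
    have e2 : 4 * m + 1 - 1 = 4 * m := by omega
    have hd : (4 * m + 1).descFactorial 3 = (4 * m - 1) * ((4 * m) * ((4 * m + 1) * 1)) := by
      simp only [Nat.descFactorial, e1, e2, Nat.sub_zero]
    rw [hd] at h1
    rw [← h1]
    ring
  rcases Nat.eq_zero_or_pos m with rfl | hm
  · simp
  · have hgoal : 2 * m * (m - 1) * (4 * m + 1) ≤ 3 * (monoTriangles col).card := by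
      obtain ⟨k, rfl⟩ := Nat.exists_eq_add_of_le hm
      set a := (monoTriangles col).card
      set b := (T.filter (fun s => ¬ isMono col s)).card
      have h1 : a + b = (4 * (1 + k) + 1).choose 3 := by rw [hsplit, hTcard]
      have h2 : 6 * (a + b) = (4 * (1 + k) + 1) * (4 * (1 + k)) * (4 * (1 + k) - 1) := by
        rw [h1, hchoose]
      have h3 : (4 * (1 + k) - 1) = 4 * k + 3 := by omega
      rw [h3] at h2
      have h4 : 2 * b ≤ (4 * (1 + k) + 1) * (4 * (1 + k) ^ 2) := htotal
      have h5 : (1 + k) - 1 = k := by omega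
      rw [h5]
      nlinarith [h2, h4]
    calc 2 * m * (m - 1) * (4 * m + 1) / 3 ≤ 3 * (monoTriangles col).card / 3 :=
          Nat.div_le_div_right hgoal
      _ = (monoTriangles col).card := by omega
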